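/- arXiv:1801.00618 — 4 statements merged into one kernel-verified Lean document; each statement's English description precedes it below -/
import Mathlib

section
/- Let A, P, Q be real m×m matrices with P, Q symmetric positive definite, AᵀP + PA = −Q, and let γ₁, γ₂ > 0 satisfy (γ₁ + γ₂)P ⪯ Q (Loewner order). Let η : ℝ → ℝᵐ be differentiable with η′(t) = A η(t) + w(t), and set V(t) = η(t)ᵀPη(t). Then for every t such that |η(t)| ≥ (2 λmax(P) / (γ₂ λmin(P))) · |w(t)|, one has V′(t) ≤ −γ₁ V(t), where λmin(P), λmax(P) denote the smallest and largest eigenvalues of P. -/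
set_option maxHeartbeats 1000000


open Matrix

/-- The Euclidean norm of a vector in `Fin n → ℝ`. -/
noncomputable def euclideanNorm {n : ℕ} (x : Fin n → ℝ) : ℝ :=
  Real.sqrt (x ⬝ᵥ x)

lemma aux_dot (m : ℕ) (U : Matrix.unitaryGroup (Fin m) ℝ) (x y : Fin m → ℝ) :
    (star (U : Matrix (Fin m) (Fin m) ℝ) *ᵥ x) ⬝ᵥ (star (U : Matrix (Fin m) (Fin m) ℝ) *ᵥ y)
      = x ⬝ᵥ y := by
  have hU : (U : Matrix (Fin m) (Fin m) ℝ) * (U : Matrix (Fin m) (Fin m) ℝ)ᵀ = 1 := by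
    rw [← conjTranspose_eq_transpose_of_trivial, ← star_eq_conjTranspose]
    exact Matrix.mem_unitaryGroup_iff.mp U.2
  rw [dotProduct_mulVec, vecMul_mulVec, star_eq_conjTranspose,
    conjTranspose_eq_transpose_of_trivial, transpose_transpose, hU, vecMul_one]

lemma aux_coord (m : ℕ) (U : Matrix.unitaryGroup (Fin m) ℝ) (f : Fin m → ℝ) (x y : Fin m → ℝ) :
    x ⬝ᵥ (((U : Matrix (Fin m) (Fin m) ℝ) * diagonal f * star (U : Matrix (Fin m) (Fin m) ℝ)) *ᵥ y)
      = ∑ i, f i * ((star (U : Matrix (Fin m) (Fin m) ℝ) *ᵥ x) i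
          * ((star (U : Matrix (Fin m) (Fin m) ℝ) *ᵥ y) i)) := by
  rw [← mulVec_mulVec, ← mulVec_mulVec, dotProduct_mulVec, ← mulVec_transpose,
    star_eq_conjTranspose, conjTranspose_eq_transpose_of_trivial]
  simp only [dotProduct, mulVec_diagonal]
  exact Finset.sum_congr rfl fun i _ => by ring

lemma aux_deriv (m : ℕ) (P : Matrix (Fin m) (Fin m) ℝ) (η : ℝ → Fin m → ℝ) (d : Fin m → ℝ)
    (t : ℝ) (hη : HasDerivAt η d t) :
    HasDerivAt (fun s => η s ⬝ᵥ P.mulVec (η s)) (d ⬝ᵥ P.mulVec (η t) + η t ⬝ᵥ P.mulVec d) t := by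
  have hco : ∀ i, HasDerivAt (fun s => η s i) (d i) t := fun i => (hasDerivAt_pi.mp hη) i
  have h : HasDerivAt (fun s => ∑ i, η s i * ∑ j, P i j * η s j)
      (∑ i, (d i * ∑ j, P i j * η t j + η t i * ∑ j, P i j * d j)) t :=
    HasDerivAt.fun_sum fun i _ =>
      (hco i).mul (HasDerivAt.fun_sum fun j _ => (hco j).const_mul (P i j))
  have hfun : (fun s => η s ⬝ᵥ P.mulVec (η s))
      = fun s => ∑ i, η s i * ∑ j, P i j * η s j := by
    funext s; simp [dotProduct, mulVec]
  rw [hfun]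
  convert h using 1
  simp [dotProduct, mulVec, Finset.sum_add_distrib]

lemma aux_flip (m : ℕ) (M : Matrix (Fin m) (Fin m) ℝ) (a b : Fin m → ℝ) :
    (M *ᵥ a) ⬝ᵥ b = a ⬝ᵥ (Mᵀ *ᵥ b) := by
  rw [dotProduct_comm, dotProduct_mulVec, mulVec_transpose, dotProduct_comm]

/-- Exponential-decrease region condition for the e-ISS Lyapunov function
`V(t) = η(t)ᵀ P η(t)` along the disturbed dynamics `η' = A η + w`:
whenever `|η(t)| ≥ (2 λmax(P) / (γ₂ λmin(P))) |w(t)|`, one has `V'(t) ≤ -γ₁ V(t)`. -/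
theorem deriv_lyapunov_le_of_large_state (m : ℕ)
    (A P Q : Matrix (Fin m) (Fin m) ℝ)
    (hPsymm : P.IsSymm) (hQsymm : Q.IsSymm) (hP : P.PosDef) (hQ : Q.PosDef)
    (hLyap : Aᵀ * P + P * A = -Q)
    (γ₁ γ₂ : ℝ) (hγ₁ : 0 < γ₁) (hγ₂ : 0 < γ₂)
    (hγ : (Q - (γ₁ + γ₂) • P).PosSemidef)
    (η w : ℝ → Fin m → ℝ)
    (hη : ∀ t, HasDerivAt η (A.mulVec (η t) + w t) t)
    (V : ℝ → ℝ) (hV : V = fun s => η s ⬝ᵥ P.mulVec (η s))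
    (t : ℝ)
    (ht : 2 * (⨆ i, hP.1.eigenvalues i) / (γ₂ * ⨅ i, hP.1.eigenvalues i) *
        euclideanNorm (w t) ≤ euclideanNorm (η t)) :
    deriv V t ≤ -γ₁ * V t := by
  set x := η t with hx
  set u := w t with hu
  -- the derivative
  have hd : HasDerivAt V ((A *ᵥ x + u) ⬝ᵥ P.mulVec x + x ⬝ᵥ P.mulVec (A *ᵥ x + u)) t := by
    rw [hV]; exact aux_deriv m P η (A *ᵥ x + u) t (hη t)
  have hderiv : deriv V t = -(x ⬝ᵥ (Q *ᵥ x)) + 2 * (x ⬝ᵥ (P *ᵥ u)) := by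
    rw [hd.deriv]
    have h1 : (A *ᵥ x) ⬝ᵥ (P *ᵥ x) = x ⬝ᵥ ((Aᵀ * P) *ᵥ x) := by
      rw [aux_flip, mulVec_mulVec]
    have h2 : x ⬝ᵥ (P *ᵥ (A *ᵥ x)) = x ⬝ᵥ ((P * A) *ᵥ x) := by rw [mulVec_mulVec]
    have h3 : u ⬝ᵥ (P *ᵥ x) = x ⬝ᵥ (P *ᵥ u) := by
      rw [dotProduct_comm, dotProduct_mulVec, ← mulVec_transpose, hPsymm.eq]
    have h4 : x ⬝ᵥ ((Aᵀ * P) *ᵥ x) + x ⬝ᵥ ((P * A) *ᵥ x) = -(x ⬝ᵥ (Q *ᵥ x)) := by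
      rw [← dotProduct_add, ← add_mulVec, hLyap, neg_mulVec, dotProduct_neg]
    rw [add_dotProduct, mulVec_add, dotProduct_add, h1, h2, h3]
    linarith [h4]
  -- nonnegativity of V-type terms
  have hxPx : V t = x ⬝ᵥ (P *ᵥ x) := by rw [hV]
  rcases Nat.eq_zero_or_pos m with hm | hm
  · subst hm
    rw [hderiv, hxPx]
    simp [dotProduct]
  -- now m > 0
  haveI : NeZero m := ⟨hm.ne'⟩
  set lam := hP.1.eigenvalues with hlam
  set lmin := ⨅ i, lam i with hlmin
  set lmax := ⨆ i, lam i with hlmax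
  have hbddb : BddBelow (Set.range lam) := Set.Finite.bddBelow (Set.finite_range _)
  have hbdda : BddAbove (Set.range lam) := Set.Finite.bddAbove (Set.finite_range _)
  have hminle : ∀ i, lmin ≤ lam i := fun i => ciInf_le hbddb i
  have hlemax : ∀ i, lam i ≤ lmax := fun i => le_ciSup hbdda i
  have hlampos : ∀ i, 0 < lam i := fun i => hP.eigenvalues_pos i
  have hlminpos : 0 < lmin := by
    obtain ⟨i₀, hi₀⟩ := Finite.exists_min lam
    have : lmin = lam i₀ := le_antisymm (ciInf_le hbddb i₀) (le_ciInf hi₀)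
    rw [this]; exact hlampos i₀
  have hlmaxpos : 0 < lmax := lt_of_lt_of_le (hlampos ⟨0, hm⟩) (hlemax ⟨0, hm⟩)
  -- spectral decomposition
  set U := hP.1.eigenvectorUnitary with hU
  have hspec : P = (U : Matrix (Fin m) (Fin m) ℝ) * diagonal lam
      * star (U : Matrix (Fin m) (Fin m) ℝ) := by
    have := hP.1.spectral_theorem
    simpa using this
  set c := star (U : Matrix (Fin m) (Fin m) ℝ) *ᵥ x with hc
  set e := star (U : Matrix (Fin m) (Fin m) ℝ) *ᵥ u with he
  have hxx : x ⬝ᵥ x = ∑ i, c i * c i := by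
    rw [← aux_dot m U x x]; simp [dotProduct, hc]
  have huu : u ⬝ᵥ u = ∑ i, e i * e i := by
    rw [← aux_dot m U u u]; simp [dotProduct, he]
  have hquad : x ⬝ᵥ (P *ᵥ x) = ∑ i, lam i * (c i * c i) := by
    conv_lhs => rw [hspec]
    exact aux_coord m U lam x x
  have hcross : x ⬝ᵥ (P *ᵥ u) = ∑ i, lam i * (c i * e i) := by
    conv_lhs => rw [hspec]
    exact aux_coord m U lam x u
  clear_value c e
  clear he hc hU
  -- Rayleigh lower bound
  have hray : lmin * (x ⬝ᵥ x) ≤ x ⬝ᵥ (P *ᵥ x) := by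
    rw [hxx, hquad, Finset.mul_sum]
    exact Finset.sum_le_sum fun i _ =>
      mul_le_mul_of_nonneg_right (hminle i) (mul_self_nonneg _)
  -- norms
  have hxxnn : (0:ℝ) ≤ x ⬝ᵥ x := by
    rw [hxx]; exact Finset.sum_nonneg fun i _ => mul_self_nonneg _
  have huunn : (0:ℝ) ≤ u ⬝ᵥ u := by
    rw [huu]; exact Finset.sum_nonneg fun i _ => mul_self_nonneg _
  have hNx : euclideanNorm x ^ 2 = x ⬝ᵥ x := Real.sq_sqrt hxxnn
  have hNu : euclideanNorm u ^ 2 = u ⬝ᵥ u := Real.sq_sqrt huunn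
  have hNxnn : 0 ≤ euclideanNorm x := Real.sqrt_nonneg _
  have hNunn : 0 ≤ euclideanNorm u := Real.sqrt_nonneg _
  -- cross-term bound : x ⬝ᵥ P u ≤ lmax * |x| * |u|
  have hCS : (∑ i, |c i| * |e i|) ≤ euclideanNorm x * euclideanNorm u := by
    have h := Finset.sum_mul_sq_le_sq_mul_sq Finset.univ (fun i => |c i|) (fun i => |e i|)
    have hnn : 0 ≤ ∑ i, |c i| * |e i| := by positivity
    have h2 : (∑ i, |c i| * |e i|) ^ 2 ≤ (euclideanNorm x * euclideanNorm u) ^ 2 := by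
      calc (∑ i, |c i| * |e i|) ^ 2 ≤ (∑ i, |c i| ^ 2) * ∑ i, |e i| ^ 2 := h
        _ = (x ⬝ᵥ x) * (u ⬝ᵥ u) := by
            rw [hxx, huu]
            congr 1 <;> exact Finset.sum_congr rfl fun i _ => by rw [sq_abs]; ring
        _ = (euclideanNorm x * euclideanNorm u) ^ 2 := by rw [mul_pow, hNx, hNu]
    calc (∑ i, |c i| * |e i|) = Real.sqrt ((∑ i, |c i| * |e i|) ^ 2) :=
          (Real.sqrt_sq hnn).symm
      _ ≤ Real.sqrt ((euclideanNorm x * euclideanNorm u) ^ 2) := Real.sqrt_le_sqrt h2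
      _ = euclideanNorm x * euclideanNorm u := Real.sqrt_sq (mul_nonneg hNxnn hNunn)
  have hcrossle : x ⬝ᵥ (P *ᵥ u) ≤ lmax * (euclideanNorm x * euclideanNorm u) := by
    rw [hcross]
    calc (∑ i, lam i * (c i * e i)) ≤ ∑ i, lmax * (|c i| * |e i|) := by
          refine Finset.sum_le_sum fun i _ => ?_
          have h1 : lam i * (c i * e i) ≤ lam i * |c i * e i| :=
            mul_le_mul_of_nonneg_left (le_abs_self _) (hlampos i).le
          have h2 : lam i * |c i * e i| ≤ lmax * |c i * e i| :=
            mul_le_mul_of_nonneg_right (hlemax i) (abs_nonneg _)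
          calc lam i * (c i * e i) ≤ lam i * |c i * e i| := h1
            _ ≤ lmax * |c i * e i| := h2
            _ = lmax * (|c i| * |e i|) := by rw [abs_mul]
      _ = lmax * ∑ i, |c i| * |e i| := by rw [Finset.mul_sum]
      _ ≤ lmax * (euclideanNorm x * euclideanNorm u) :=
          mul_le_mul_of_nonneg_left hCS hlmaxpos.le
  -- from ht : 2 * lmax * |u| ≤ γ₂ * lmin * |x|
  have htt : 2 * lmax * euclideanNorm u ≤ γ₂ * lmin * euclideanNorm x := by
    have hpos : 0 < γ₂ * lmin := mul_pos hγ₂ hlminpos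
    have := ht
    rw [div_mul_eq_mul_div, div_le_iff₀ hpos] at this
    linarith
  -- 2 x⬝ᵥPu ≤ γ₂ * x⬝ᵥPx
  have hmain : 2 * (x ⬝ᵥ (P *ᵥ u)) ≤ γ₂ * (x ⬝ᵥ (P *ᵥ x)) := by
    have h1 : 2 * (x ⬝ᵥ (P *ᵥ u)) ≤ euclideanNorm x * (2 * lmax * euclideanNorm u) := by
      have := hcrossle
      nlinarith
    have h2 : euclideanNorm x * (2 * lmax * euclideanNorm u)
        ≤ euclideanNorm x * (γ₂ * lmin * euclideanNorm x) :=
      mul_le_mul_of_nonneg_left htt hNxnn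
    have h3 : euclideanNorm x * (γ₂ * lmin * euclideanNorm x) = γ₂ * (lmin * (x ⬝ᵥ x)) := by
      rw [← hNx]; ring
    have h4 : γ₂ * (lmin * (x ⬝ᵥ x)) ≤ γ₂ * (x ⬝ᵥ (P *ᵥ x)) :=
      mul_le_mul_of_nonneg_left hray hγ₂.le
    linarith
  -- Q bound
  have hQbd : (γ₁ + γ₂) * (x ⬝ᵥ (P *ᵥ x)) ≤ x ⬝ᵥ (Q *ᵥ x) := by
    have h := hγ.dotProduct_mulVec_nonneg x
    simp only [star_trivial, sub_mulVec, smul_mulVec, dotProduct_sub, dotProduct_smul,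
      smul_eq_mul, RCLike.re_to_real] at h
    linarith
  rw [hderiv, hxPx]
  linarith
end

section
/- Let c > 0, r ≥ 0, and let V : [0, ∞) → ℝ be differentiable and nonnegative such that V′(t) ≤ −c V(t) for every t ≥ 0 with V(t) ≥ r. Then V(t) ≤ max(e^{−ct} V(0), r) for all t ≥ 0. -/
lemma lyapunov_key (c : ℝ) (V : ℝ → ℝ) (a b : ℝ) (hab : a ≤ b) (ha : 0 ≤ a)
    (hdiff : ∀ t, 0 ≤ t → DifferentiableAt ℝ V t)
    (hV' : ∀ u ∈ Set.Ioo a b, deriv V u ≤ -c * V u) :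
    V b ≤ Real.exp (-c * (b - a)) * V a := by
  set f : ℝ → ℝ := fun u => Real.exp (c * u) * V u with hf
  have hcont : ContinuousOn f (Set.Icc a b) := by
    intro x hx
    have hx0 : (0:ℝ) ≤ x := le_trans ha hx.1
    exact (((Real.continuous_exp.comp (continuous_const.mul continuous_id)).continuousAt).mul
      (hdiff x hx0).continuousAt).continuousWithinAt
  have hanti : AntitoneOn f (Set.Icc a b) := by
    apply antitoneOn_of_deriv_nonpos (convex_Icc a b) hcont
    · intro x hx
      rw [interior_Icc] at hx
      have hx0 : (0:ℝ) ≤ x := le_trans ha hx.1.le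
      exact DifferentiableAt.differentiableWithinAt <|
        ((Real.differentiable_exp.differentiableAt.comp x
          ((differentiable_id.const_mul c).differentiableAt)).mul (hdiff x hx0))
    · intro x hx
      rw [interior_Icc] at hx
      have hx0 : (0:ℝ) ≤ x := le_trans ha hx.1.le
      have h1 : HasDerivAt (fun u => Real.exp (c * u)) (Real.exp (c * x) * c) x := by
        simpa using ((hasDerivAt_id x).const_mul c).exp
      have h2 : HasDerivAt V (deriv V x) x := (hdiff x hx0).hasDerivAt
      have h3 : HasDerivAt f (Real.exp (c * x) * c * V x + Real.exp (c * x) * deriv V x) x :=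
        h1.mul h2
      rw [h3.deriv]
      have h4 := hV' x hx
      have h5 := Real.exp_pos (c * x)
      nlinarith
  have h6 : f b ≤ f a := hanti (Set.left_mem_Icc.2 hab) (Set.right_mem_Icc.2 hab) hab
  have h7 : Real.exp (c * b) * V b ≤ Real.exp (c * a) * V a := h6
  have h8 : (0:ℝ) < Real.exp (c * b) := Real.exp_pos _
  calc V b = Real.exp (-(c * b)) * (Real.exp (c * b) * V b) := by
        rw [← mul_assoc, ← Real.exp_add]; simp
    _ ≤ Real.exp (-(c * b)) * (Real.exp (c * a) * V a) := by
        exact mul_le_mul_of_nonneg_left h7 (Real.exp_pos _).le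
    _ = Real.exp (-c * (b - a)) * V a := by
        rw [← mul_assoc, ← Real.exp_add]; ring_nf

/-- Region-based e-ISS Lyapunov condition: if a nonnegative differentiable `V`
satisfies `V' ≤ -cV` whenever `V ≥ r`, then `V(t) ≤ max (e^{-ct} V(0)) r`. -/
theorem lyapunov_ultimate_bound (c r : ℝ) (hc : 0 < c) (hr : 0 ≤ r)
    (V : ℝ → ℝ)
    (hdiff : ∀ t, 0 ≤ t → DifferentiableAt ℝ V t)
    (hnonneg : ∀ t, 0 ≤ t → 0 ≤ V t)
    (hV : ∀ t, 0 ≤ t → r ≤ V t → deriv V t ≤ -c * V t) :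
    ∀ t, 0 ≤ t → V t ≤ max (Real.exp (-c * t) * V 0) r := by
  intro t ht
  set S : Set ℝ := Set.Icc 0 t ∩ V ⁻¹' Set.Iic r with hS
  by_cases hSne : S.Nonempty
  · -- s = sup S
    have hVcont : ContinuousOn V (Set.Icc 0 t) := fun x hx =>
      ((hdiff x hx.1).continuousAt).continuousWithinAt
    have hSclosed : IsClosed S :=
      ContinuousOn.preimage_isClosed_of_isClosed hVcont isClosed_Icc isClosed_Iic
    have hSbdd : BddAbove S := BddAbove.mono Set.inter_subset_left (bddAbove_Icc)
    have hsmem : sSup S ∈ S := hSclosed.csSup_mem hSne hSbdd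
    set s := sSup S with hs
    obtain ⟨⟨hs0, hst⟩, hVs⟩ := hsmem
    have hgt : ∀ u, s < u → u ≤ t → r < V u := by
      intro u hsu hut
      by_contra h
      have : u ∈ S := ⟨⟨le_trans hs0 hsu.le, hut⟩, le_of_not_gt h⟩
      exact absurd (le_csSup hSbdd this) (not_le.2 hsu)
    rcases eq_or_lt_of_le hst with heq | hlt
    · exact le_max_of_le_right (heq ▸ hVs)
    · -- r ≤ V s by continuity from the right
      have hVsge : r ≤ V s := by
        have htend : Filter.Tendsto V (nhdsWithin s (Set.Ioc s t)) (nhds (V s)) :=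
          ((hdiff s hs0).continuousAt.continuousWithinAt)
        have hne : (nhdsWithin s (Set.Ioc s t)).NeBot := left_nhdsWithin_Ioc_neBot hlt
        refine ge_of_tendsto htend ?_
        filter_upwards [self_mem_nhdsWithin] with u hu
        exact (hgt u hu.1 hu.2).le
      have key := lyapunov_key c V s t hst hs0 hdiff ?_
      · have hVseq : V s = r := le_antisymm hVs hVsge
        have hexp : Real.exp (-c * (t - s)) ≤ 1 := by
          rw [Real.exp_le_one_iff]
          nlinarith
        refine le_max_of_le_right ?_
        calc V t ≤ Real.exp (-c * (t - s)) * V s := key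
          _ = Real.exp (-c * (t - s)) * r := by rw [hVseq]
          _ ≤ 1 * r := mul_le_mul_of_nonneg_right hexp hr
          _ = r := one_mul r
      · intro u hu
        exact hV u (le_trans hs0 hu.1.le) (hgt u hu.1 hu.2.le).le
  · -- V > r on all of [0, t]
    have key := lyapunov_key c V 0 t ht le_rfl hdiff ?_
    · simpa using le_max_of_le_left (by simpa using key)
    · intro u hu
      have hu0 : 0 ≤ u := hu.1.le
      have hru : r ≤ V u := by
        by_contra h
        exact hSne ⟨u, ⟨⟨hu0, hu.2.le⟩, le_of_not_ge h⟩⟩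
      exact hV u hu0 hru
end

section
/- Let ϑ : ℝⁿ → ℝⁿ be Lipschitz continuous with ϑ(0) = 0, and suppose there exist N ≥ 1 and ξ ∈ (0, 1) such that |ϑ^i(ζ)| ≤ N ξ^i |ζ| for all ζ ∈ ℝⁿ and all i ≥ 0 (ϑ^i denoting the i-fold iterate). Then there exist a function V : ℝⁿ → ℝ and constants b₁, b₂, b₃, b₄ > 0 such that for all ζ, ζ′ ∈ ℝⁿ: (i) b₁|ζ|² ≤ V(ζ) ≤ b₂|ζ|²; (ii) V(ϑ(ζ)) − V(ζ) ≤ −b₃|ζ|²; (iii) |V(ζ) − V(ζ′)| ≤ b₄ |ζ − ζ′| (|ζ| + |ζ′|). -/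
open scoped NNReal

/-- Discrete-time converse Lyapunov theorem for an exponentially stable fixed point of a
Lipschitz map `ϑ` (the restricted Poincaré map of the partial hybrid zero dynamics):
exponential stability of the iteration yields a Lyapunov function with quadratic bounds,
quadratic decrease, and a local Lipschitz-type estimate. -/
theorem converse_lyapunov_discrete (n : ℕ)
    (ϑ : EuclideanSpace ℝ (Fin n) → EuclideanSpace ℝ (Fin n))
    (L : ℝ≥0) (hLip : LipschitzWith L ϑ) (h0 : ϑ 0 = 0)
    (N ξ : ℝ) (hN : 1 ≤ N) (hξ0 : 0 < ξ) (hξ1 : ξ < 1)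
    (hstab : ∀ (ζ : EuclideanSpace ℝ (Fin n)) (i : ℕ), ‖ϑ^[i] ζ‖ ≤ N * ξ ^ i * ‖ζ‖) :
    ∃ (V : EuclideanSpace ℝ (Fin n) → ℝ) (b₁ b₂ b₃ b₄ : ℝ),
      0 < b₁ ∧ 0 < b₂ ∧ 0 < b₃ ∧ 0 < b₄ ∧
      ∀ ζ ζ' : EuclideanSpace ℝ (Fin n),
        (b₁ * ‖ζ‖ ^ 2 ≤ V ζ ∧ V ζ ≤ b₂ * ‖ζ‖ ^ 2) ∧
        V (ϑ ζ) - V ζ ≤ -b₃ * ‖ζ‖ ^ 2 ∧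
        |V ζ - V ζ'| ≤ b₄ * ‖ζ - ζ'‖ * (‖ζ‖ + ‖ζ'‖) := by
  have hN0 : 0 < N := lt_of_lt_of_le one_pos hN
  -- choose M with N * ξ^M < 1
  obtain ⟨M, hMlt⟩ := exists_pow_lt_of_lt_one (by positivity : (0:ℝ) < 1 / N) hξ1
  have hM : N * ξ ^ M < 1 := by
    have := mul_lt_mul_of_pos_left hMlt hN0
    rwa [mul_one_div, div_self hN0.ne'] at this
  have hM1 : 1 ≤ M := by
    rcases Nat.eq_zero_or_pos M with h | h
    · simp [h] at hM; linarith
    · exact h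
  set V : EuclideanSpace ℝ (Fin n) → ℝ :=
    fun ζ => ∑ i ∈ Finset.range M, ‖ϑ^[i] ζ‖ ^ 2 with hV
  have hξi : ∀ i : ℕ, ξ ^ i ≤ 1 := fun i => pow_le_one₀ hξ0.le hξ1.le
  refine ⟨V, 1, M * N ^ 2, 1 - (N * ξ ^ M) ^ 2,
    N * (1 + ∑ i ∈ Finset.range M, (L : ℝ) ^ i), one_pos, ?_, ?_, ?_, ?_⟩
  · have : (1:ℝ) ≤ M := by exact_mod_cast hM1
    nlinarith
  · nlinarith [mul_nonneg hN0.le (pow_nonneg hξ0.le M)]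
  · have hs : (0:ℝ) ≤ ∑ i ∈ Finset.range M, (L : ℝ) ^ i :=
      Finset.sum_nonneg fun i _ => by positivity
    nlinarith
  intro ζ ζ'
  have key : ∀ ζ, ∀ i, ‖ϑ^[i] ζ‖ ≤ N * ‖ζ‖ := by
    intro ζ i
    calc ‖ϑ^[i] ζ‖ ≤ N * ξ ^ i * ‖ζ‖ := hstab ζ i
      _ ≤ N * 1 * ‖ζ‖ := by
          apply mul_le_mul_of_nonneg_right _ (norm_nonneg _)
          exact mul_le_mul_of_nonneg_left (hξi i) hN0.le
      _ = N * ‖ζ‖ := by ring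
  refine ⟨⟨?_, ?_⟩, ?_, ?_⟩
  · -- lower bound: the i = 0 term
    have h0' : ‖ϑ^[0] ζ‖ ^ 2 = ‖ζ‖ ^ 2 := by simp
    calc 1 * ‖ζ‖ ^ 2 = ‖ϑ^[0] ζ‖ ^ 2 := by rw [h0']; ring
      _ ≤ V ζ := by
          apply Finset.single_le_sum (f := fun i => ‖ϑ^[i] ζ‖ ^ 2)
          · intro i _; positivity
          · exact Finset.mem_range.mpr (by omega)
  · -- upper bound
    have : V ζ ≤ ∑ _i ∈ Finset.range M, N ^ 2 * ‖ζ‖ ^ 2 := by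
      apply Finset.sum_le_sum
      intro i _
      have := key ζ i
      nlinarith [norm_nonneg (ϑ^[i] ζ), norm_nonneg ζ]
    simpa [Finset.sum_const, mul_assoc] using this
  · -- decrease
    have hshift : V (ϑ ζ) = ∑ i ∈ Finset.range M, ‖ϑ^[i + 1] ζ‖ ^ 2 := by
      simp [hV, Function.iterate_succ_apply]
    have htel : V (ϑ ζ) - V ζ = ‖ϑ^[M] ζ‖ ^ 2 - ‖ζ‖ ^ 2 := by
      rw [hshift, hV]
      have h1 : ∑ i ∈ Finset.range (M + 1), ‖ϑ^[i] ζ‖ ^ 2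
          = (∑ i ∈ Finset.range M, ‖ϑ^[i + 1] ζ‖ ^ 2) + ‖ϑ^[0] ζ‖ ^ 2 :=
        Finset.sum_range_succ' _ M
      have h2 : ∑ i ∈ Finset.range (M + 1), ‖ϑ^[i] ζ‖ ^ 2
          = (∑ i ∈ Finset.range M, ‖ϑ^[i] ζ‖ ^ 2) + ‖ϑ^[M] ζ‖ ^ 2 :=
        Finset.sum_range_succ _ M
      simp only [Function.iterate_zero_apply] at h1
      linarith
    rw [htel]
    have := hstab ζ M
    nlinarith [norm_nonneg (ϑ^[M] ζ), norm_nonneg ζ,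
      mul_nonneg hN0.le (pow_nonneg hξ0.le M)]
  · -- Lipschitz-type estimate
    have term : ∀ i ∈ Finset.range M,
        |‖ϑ^[i] ζ‖ ^ 2 - ‖ϑ^[i] ζ'‖ ^ 2|
          ≤ (L : ℝ) ^ i * ‖ζ - ζ'‖ * (N * (‖ζ‖ + ‖ζ'‖)) := by
      intro i _
      have hdist : ‖ϑ^[i] ζ - ϑ^[i] ζ'‖ ≤ (L : ℝ) ^ i * ‖ζ - ζ'‖ := by
        have := (hLip.iterate i).dist_le_mul ζ ζ'
        simpa [dist_eq_norm] using this
      have habs : |‖ϑ^[i] ζ‖ - ‖ϑ^[i] ζ'‖| ≤ ‖ϑ^[i] ζ - ϑ^[i] ζ'‖ :=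
        abs_norm_sub_norm_le _ _
      have hsum : ‖ϑ^[i] ζ‖ + ‖ϑ^[i] ζ'‖ ≤ N * (‖ζ‖ + ‖ζ'‖) := by
        have := key ζ i; have := key ζ' i; linarith
      have hfac : |‖ϑ^[i] ζ‖ ^ 2 - ‖ϑ^[i] ζ'‖ ^ 2|
          = |‖ϑ^[i] ζ‖ - ‖ϑ^[i] ζ'‖| * (‖ϑ^[i] ζ‖ + ‖ϑ^[i] ζ'‖) := by
        rw [sq_sub_sq, abs_mul, abs_of_nonneg (by positivity : (0:ℝ) ≤ ‖ϑ^[i] ζ‖ + ‖ϑ^[i] ζ'‖), mul_comm]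
      rw [hfac]
      have h1 : |‖ϑ^[i] ζ‖ - ‖ϑ^[i] ζ'‖| ≤ (L : ℝ) ^ i * ‖ζ - ζ'‖ :=
        habs.trans hdist
      exact mul_le_mul h1 hsum (by positivity) (by positivity)
    have h1 : |V ζ - V ζ'| ≤ ∑ i ∈ Finset.range M,
        |‖ϑ^[i] ζ‖ ^ 2 - ‖ϑ^[i] ζ'‖ ^ 2| := by
      rw [hV, ← Finset.sum_sub_distrib]
      exact Finset.abs_sum_le_sum_abs _ _
    have h2 : ∑ i ∈ Finset.range M, |‖ϑ^[i] ζ‖ ^ 2 - ‖ϑ^[i] ζ'‖ ^ 2|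
        ≤ (∑ i ∈ Finset.range M, (L : ℝ) ^ i) * ‖ζ - ζ'‖ * (N * (‖ζ‖ + ‖ζ'‖)) := by
      rw [Finset.sum_mul, Finset.sum_mul]
      exact Finset.sum_le_sum term
    have h3 : (∑ i ∈ Finset.range M, (L : ℝ) ^ i) * ‖ζ - ζ'‖ * (N * (‖ζ‖ + ‖ζ'‖))
        ≤ N * (1 + ∑ i ∈ Finset.range M, (L : ℝ) ^ i) * ‖ζ - ζ'‖ * (‖ζ‖ + ‖ζ'‖) := by
      have hs : (0:ℝ) ≤ ∑ i ∈ Finset.range M, (L : ℝ) ^ i :=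
        Finset.sum_nonneg fun i _ => by positivity
      nlinarith [norm_nonneg (ζ - ζ'), norm_nonneg ζ, norm_nonneg ζ',
        mul_nonneg (norm_nonneg (ζ - ζ')) (add_nonneg (norm_nonneg ζ) (norm_nonneg ζ'))]
    linarith
end

section
/- Let K_p, K_d be real symmetric n×n matrices, c_c, c̄_d, κ_q > 0, and let q, q_d : ℝ → ℝⁿ be twice differentiable with |q_d′(t)| ≤ κ_q and |q_d″(t)| ≤ κ_q for all t. Set e := q − q_d. Let D : ℝ → M_n(ℝ) be differentiable with D(t) symmetric and ‖D(t)‖ ≤ c̄_d, let C : ℝ → M_n(ℝ) satisfy ‖C(t)‖ ≤ c_c |q′(t)|, and let G : ℝ → ℝⁿ satisfy |G(t)| ≤ c_c. Assume the closed-loop dynamics D(t) q″(t) + C(t) q′(t) + G(t) = −K_p e(t) − K_d e′(t) and the passivity identity e′(t)ᵀ D′(t) e′(t) = 2 e′(t)ᵀ C(t) e′(t) hold for all t. Then V₀(t) := ½ e(t)ᵀK_p e(t) + ½ e′(t)ᵀ D(t) e′(t) satisfies, for all t: V₀′(t) ≤ −e′(t)ᵀ K_d e′(t) + c_c κ_q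 |e′(t)|² + (c_c κ_q² + c_c + c̄_d κ_q) |e′(t)|. -/
open Matrix
open scoped Matrix.Norms.L2Operator

namespace ELDBaux

variable {n : ℕ}

noncomputable def toE (x : Fin n → ℝ) : EuclideanSpace ℝ (Fin n) :=
  (WithLp.equiv 2 (Fin n → ℝ)).symm x

lemma enorm_eq (x : Fin n → ℝ) : euclideanNorm x = ‖toE x‖ := by
  rw [EuclideanSpace.norm_eq]
  unfold euclideanNorm dotProduct
  congr 1
  refine Finset.sum_congr rfl fun i _ => ?_
  simp [toE, Real.norm_eq_abs, sq_abs, sq]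

lemma enorm_nonneg (x : Fin n → ℝ) : 0 ≤ euclideanNorm x := Real.sqrt_nonneg _

lemma abs_dot_le (x y : Fin n → ℝ) : |x ⬝ᵥ y| ≤ euclideanNorm x * euclideanNorm y := by
  rw [enorm_eq, enorm_eq]
  have h := abs_real_inner_le_norm (toE x) (toE y)
  have : (inner ℝ (toE x) (toE y) : ℝ) = x ⬝ᵥ y := by
    simp [toE, PiLp.inner_apply, dotProduct, RCLike.inner_apply, mul_comm]
  rwa [this] at h

lemma enorm_add_le (x y : Fin n → ℝ) :
    euclideanNorm (x + y) ≤ euclideanNorm x + euclideanNorm y := by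
  rw [enorm_eq, enorm_eq, enorm_eq]
  have : toE (x + y) = toE x + toE y := rfl
  rw [this]; exact norm_add_le _ _

lemma enorm_mulVec_le (A : Matrix (Fin n) (Fin n) ℝ) (x : Fin n → ℝ) :
    euclideanNorm (A *ᵥ x) ≤ ‖A‖ * euclideanNorm x := by
  rw [enorm_eq, enorm_eq]
  exact A.l2_opNorm_mulVec (toE x)

lemma symm_dot {A : Matrix (Fin n) (Fin n) ℝ} (hA : A.IsSymm) (x y : Fin n → ℝ) :
    x ⬝ᵥ A *ᵥ y = y ⬝ᵥ A *ᵥ x := by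
  rw [Matrix.dotProduct_mulVec, ← Matrix.mulVec_transpose, hA, dotProduct_comm]

lemma comp_proj {f : ℝ → Fin n → ℝ} {t : ℝ} (hf : DifferentiableAt ℝ f t) (i : Fin n) :
    HasDerivAt (fun s => f s i) (deriv f t i) t := by
  let L : (Fin n → ℝ) →ₗ[ℝ] ℝ :=
    { toFun := fun x => x i, map_add' := fun _ _ => rfl, map_smul' := fun _ _ => rfl }
  exact (LinearMap.toContinuousLinearMap L).hasFDerivAt.comp_hasDerivAt t hf.hasDerivAt

lemma entry_hasDerivAt {D : ℝ → Matrix (Fin n) (Fin n) ℝ} {t : ℝ}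
    (hD : DifferentiableAt ℝ D t) (i j : Fin n) :
    HasDerivAt (fun s => D s i j) (deriv D t i j) t := by
  let L : Matrix (Fin n) (Fin n) ℝ →ₗ[ℝ] ℝ :=
    { toFun := fun M => M i j, map_add' := fun _ _ => rfl, map_smul' := fun _ _ => rfl }
  exact (LinearMap.toContinuousLinearMap L).hasFDerivAt.comp_hasDerivAt t hD.hasDerivAt

lemma hasDerivAt_dotA {u v : ℝ → Fin n → ℝ} {A : ℝ → Matrix (Fin n) (Fin n) ℝ} {t : ℝ}
    (hu : DifferentiableAt ℝ u t) (hv : DifferentiableAt ℝ v t)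
    (hA : DifferentiableAt ℝ A t) :
    HasDerivAt (fun s => u s ⬝ᵥ (A s) *ᵥ (v s))
      (deriv u t ⬝ᵥ (A t) *ᵥ v t +
        (u t ⬝ᵥ (deriv A t) *ᵥ v t + u t ⬝ᵥ (A t) *ᵥ deriv v t)) t := by
  have key : ∀ i : Fin n, HasDerivAt (fun s => u s i * ((A s) *ᵥ (v s)) i)
      (deriv u t i * ((A t) *ᵥ v t) i +
        u t i * (((deriv A t) *ᵥ v t) i + ((A t) *ᵥ deriv v t) i)) t := by
    intro i
    have hAv : HasDerivAt (fun s => ((A s) *ᵥ (v s)) i)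
        (((deriv A t) *ᵥ v t) i + ((A t) *ᵥ deriv v t) i) t := by
      have h1 : ∀ j : Fin n, HasDerivAt (fun s => A s i j * v s j)
          (deriv A t i j * v t j + A t i j * deriv v t j) t :=
        fun j => (entry_hasDerivAt hA i j).mul (comp_proj hv j)
      have hsum := HasDerivAt.fun_sum (fun j (_ : j ∈ Finset.univ) => h1 j)
      simpa [Matrix.mulVec, dotProduct, Finset.sum_add_distrib] using hsum
    exact (comp_proj hu i).mul hAv
  have hsum := HasDerivAt.fun_sum (fun i (_ : i ∈ Finset.univ) => key i)
  simpa [dotProduct, Finset.sum_add_distrib, mul_add] using hsum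

end ELDBaux

set_option maxHeartbeats 1000000 in
open ELDBaux in
/-- Derivative estimate for the energy part `V₀ = ½ eᵀK_p e + ½ ėᵀD ė` of the strict
Lyapunov function for PD tracking control of a robot manipulator:
`V₀′ ≤ −ėᵀK_d ė + c_c κ_q |ė|² + (c_c κ_q² + c_c + c̄_d κ_q)|ė|`. -/
theorem energy_lyapunov_derivative_bound (n : ℕ)
    (Kp Kd : Matrix (Fin n) (Fin n) ℝ) (hKpsymm : Kp.IsSymm) (hKdsymm : Kd.IsSymm)
    (cc cD κq : ℝ) (hcc : 0 < cc) (hcD : 0 < cD) (hκq : 0 < κq)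
    (q qd : ℝ → Fin n → ℝ)
    (hq : Differentiable ℝ q) (hq' : Differentiable ℝ (deriv q))
    (hqd : Differentiable ℝ qd) (hqd' : Differentiable ℝ (deriv qd))
    (hqdvel : ∀ t, euclideanNorm (deriv qd t) ≤ κq)
    (hqdacc : ∀ t, euclideanNorm (deriv (deriv qd) t) ≤ κq)
    (e : ℝ → Fin n → ℝ) (he : e = q - qd)
    (D : ℝ → Matrix (Fin n) (Fin n) ℝ) (hDdiff : Differentiable ℝ D)
    (hDsymm : ∀ t, (D t).IsSymm) (hDnorm : ∀ t, ‖D t‖ ≤ cD)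
    (C : ℝ → Matrix (Fin n) (Fin n) ℝ)
    (hCnorm : ∀ t, ‖C t‖ ≤ cc * euclideanNorm (deriv q t))
    (G : ℝ → Fin n → ℝ) (hGnorm : ∀ t, euclideanNorm (G t) ≤ cc)
    (hdyn : ∀ t, (D t).mulVec (deriv (deriv q) t) + (C t).mulVec (deriv q t) + G t =
        -(Kp.mulVec (e t)) - Kd.mulVec (deriv e t))
    (hpassive : ∀ t, deriv e t ⬝ᵥ (deriv D t).mulVec (deriv e t) =
        2 * (deriv e t ⬝ᵥ (C t).mulVec (deriv e t)))
    (V₀ : ℝ → ℝ)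
    (hV₀ : V₀ = fun t => (1 / 2) * (e t ⬝ᵥ Kp.mulVec (e t)) +
        (1 / 2) * (deriv e t ⬝ᵥ (D t).mulVec (deriv e t))) :
    ∀ t, deriv V₀ t ≤ -(deriv e t ⬝ᵥ Kd.mulVec (deriv e t)) +
        cc * κq * euclideanNorm (deriv e t) ^ 2 +
        (cc * κq ^ 2 + cc + cD * κq) * euclideanNorm (deriv e t) := by
  intro t
  have hediff : Differentiable ℝ e := by rw [he]; exact hq.sub hqd
  have heD : ∀ s, HasDerivAt e (deriv q s - deriv qd s) s := fun s => by
    rw [he]; exact ((hq s).hasDerivAt.sub (hqd s).hasDerivAt)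
  have he' : deriv e = fun s => deriv q s - deriv qd s := funext fun s => (heD s).deriv
  have he'diff : Differentiable ℝ (deriv e) := by rw [he']; exact hq'.sub hqd'
  have heD2 : HasDerivAt (deriv e) (deriv (deriv q) t - deriv (deriv qd) t) t := by
    rw [he']; exact ((hq' t).hasDerivAt.sub (hqd' t).hasDerivAt)
  set E := e t with hE
  set ed := deriv e t with hed
  set edd := deriv (deriv e) t with hedd
  set vd := deriv qd t with hvd
  set ad := deriv (deriv qd) t with had
  have hedd_eq : edd = deriv (deriv q) t - ad := heD2.deriv
  have hed_eq : ed = deriv q t - vd := (heD t).deriv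
  have hq1 : deriv q t = ed + vd := by rw [hed_eq]; abel
  have hq2 : deriv (deriv q) t = edd + ad := by rw [hedd_eq]; abel
  -- derivative of V₀
  have h1 : HasDerivAt (fun s => e s ⬝ᵥ Kp *ᵥ (e s))
      (ed ⬝ᵥ Kp *ᵥ E + (E ⬝ᵥ (deriv (fun _ : ℝ => Kp) t) *ᵥ E + E ⬝ᵥ Kp *ᵥ ed)) t :=
    hasDerivAt_dotA (hediff t) (hediff t) (differentiableAt_const _)
  have h2 : HasDerivAt (fun s => deriv e s ⬝ᵥ (D s) *ᵥ (deriv e s))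
      (edd ⬝ᵥ (D t) *ᵥ ed + (ed ⬝ᵥ (deriv D t) *ᵥ ed + ed ⬝ᵥ (D t) *ᵥ edd)) t :=
    hasDerivAt_dotA (he'diff t) (he'diff t) (hDdiff t)
  have hV : HasDerivAt V₀
      ((1 / 2 : ℝ) * (ed ⬝ᵥ Kp *ᵥ E + (E ⬝ᵥ (deriv (fun _ : ℝ => Kp) t) *ᵥ E + E ⬝ᵥ Kp *ᵥ ed)) +
        (1 / 2 : ℝ) * (edd ⬝ᵥ (D t) *ᵥ ed + (ed ⬝ᵥ (deriv D t) *ᵥ ed + ed ⬝ᵥ (D t) *ᵥ edd))) t := by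
    rw [hV₀]; exact (h1.const_mul (1 / 2 : ℝ)).add (h2.const_mul (1 / 2 : ℝ))
  have hdV := hV.deriv
  have hzero : deriv (fun _ : ℝ => Kp) t = 0 := deriv_const _ _
  rw [hzero, Matrix.zero_mulVec, dotProduct_zero] at hdV
  -- exact value of the derivative
  have hs1 : E ⬝ᵥ Kp *ᵥ ed = ed ⬝ᵥ Kp *ᵥ E := symm_dot hKpsymm E ed
  have hs2 : edd ⬝ᵥ (D t) *ᵥ ed = ed ⬝ᵥ (D t) *ᵥ edd := symm_dot (hDsymm t) edd ed
  have hpass := hpassive t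
  have hd2 : ed ⬝ᵥ ((D t) *ᵥ (edd + ad) + (C t) *ᵥ (ed + vd) + G t) =
      ed ⬝ᵥ (-(Kp *ᵥ E) - Kd *ᵥ ed) := by
    rw [← hq1, ← hq2, hdyn t]
  simp only [Matrix.mulVec_add, dotProduct_add, dotProduct_sub,
    dotProduct_neg] at hd2
  have hkey : deriv V₀ t = -(ed ⬝ᵥ Kd *ᵥ ed) - ed ⬝ᵥ ((C t) *ᵥ vd) - ed ⬝ᵥ G t
      - ed ⬝ᵥ ((D t) *ᵥ ad) := by
    rw [hdV]; rw [← hed] at hpass; linarith [hs1, hs2, hpass, hd2]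
  rw [hkey]
  -- bounds
  set r := euclideanNorm ed with hr
  have hr0 : 0 ≤ r := enorm_nonneg ed
  have hYb : -(ed ⬝ᵥ G t) ≤ cc * r := by
    have h := (neg_le_abs _).trans ((abs_dot_le ed (G t)))
    have := mul_le_mul_of_nonneg_left (hGnorm t) hr0
    nlinarith
  have hZb : -(ed ⬝ᵥ ((D t) *ᵥ ad)) ≤ cD * κq * r := by
    have h1 := (neg_le_abs _).trans (abs_dot_le ed ((D t) *ᵥ ad))
    have h2 := enorm_mulVec_le (D t) ad
    have h3 : ‖D t‖ * euclideanNorm ad ≤ cD * κq :=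
      mul_le_mul (hDnorm t) (hqdacc t) (enorm_nonneg _) hcD.le
    nlinarith [enorm_nonneg ((D t) *ᵥ ad), norm_nonneg (D t), enorm_nonneg ad]
  have hXb : -(ed ⬝ᵥ ((C t) *ᵥ vd)) ≤ cc * κq * r ^ 2 + cc * κq ^ 2 * r := by
    have h1 := (neg_le_abs _).trans (abs_dot_le ed ((C t) *ᵥ vd))
    have h2 := enorm_mulVec_le (C t) vd
    have a2 := hCnorm t
    have a3 := hqdvel t
    have a4 : euclideanNorm (deriv q t) ≤ r + κq := by
      rw [hq1]; exact (ELDBaux.enorm_add_le ed vd).trans (by linarith)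
    have h3 : ‖C t‖ * euclideanNorm vd ≤ (cc * (r + κq)) * κq := by
      apply mul_le_mul _ a3 (enorm_nonneg _) (by positivity)
      exact a2.trans (by nlinarith)
    have h4 : euclideanNorm ((C t) *ᵥ vd) ≤ cc * (r + κq) * κq := h2.trans h3
    have h5 : r * euclideanNorm ((C t) *ᵥ vd) ≤ r * (cc * (r + κq) * κq) :=
      mul_le_mul_of_nonneg_left h4 hr0
    nlinarith
  linarith
end
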